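/- Work over ℤ in the ring 𝒰 = ℤ[X₁^{±1},…,X₅^{±1}, Z₁,…,Z₅]. In type G₂ with simple roots α₁, α₂ satisfying α₂(α₁^∨) = −3 and α₁(α₂^∨) = −1, take M = (α₂, α₁, α₂, α₁, α₂), so that m₁ = 1, m₂ = X₁³, m₃ = X₁^{-2}X₂, m₄ = X₁³X₂^{-2}X₃³, m₅ = X₁^{-2}X₂X₃^{-2}X₄. With the recursive ℤ-linear operator r_M defined as below, r_M(X₁²X₂²X₃²X₄²X₅²) = −13. -/

import Mathlib

/-- The ring `𝒰 = ℤ[X₁^{±1},…,X₅^{±1}, Z₁,…,Z₅]`, realized as the monoid algebra of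
`(Fin 5 → ℤ) × (Fin 5 → ℕ)` (X-exponents integral, Z-exponents natural) over `ℤ`. -/
abbrev URing : Type := AddMonoidAlgebra ℤ ((Fin 5 → ℤ) × (Fin 5 → ℕ))

/-- The monomial `∏ X_j^{a j} ∏ Z_j^{b j}` in `𝒰`. -/
noncomputable def umon (a : Fin 5 → ℤ) (b : Fin 5 → ℕ) : URing :=
  AddMonoidAlgebra.single (a, b) 1

/-- The exponent vectors of the monomials `m₁ = 1`, `m₂ = X₁³`, `m₃ = X₁⁻²X₂`,
`m₄ = X₁³X₂⁻²X₃³`, `m₅ = X₁⁻²X₂X₃⁻²X₄` (type `G₂`, `M = (α₂,α₁,α₂,α₁,α₂)`). -/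
def mExp : Fin 5 → (Fin 5 → ℤ) :=
  ![0, ![3, 0, 0, 0, 0], ![-2, 1, 0, 0, 0], ![3, -2, 3, 0, 0], ![-2, 1, -2, 1, 0]]

/-- The `r`-th power `m_i^r` (`r : ℤ`), a Laurent monomial in the `X` variables. -/
noncomputable def mPow (i : Fin 5) (r : ℤ) : URing := umon (r • mExp i) 0

/-- One step of the recursion defining `r_M^ε`: given the operator `f = r_M^{ε - (i)}`,
the largest active index `i`, and a monomial with exponents `m` (coefficient handled
by linearity), apply the case analysis on `r = ` X-exponent and `s = ` Z-exponent at `i`. -/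
noncomputable def rStep (f : URing → ℤ) (i : Fin 5)
    (m : (Fin 5 → ℤ) × (Fin 5 → ℕ)) : ℤ :=
  let r : ℤ := m.1 i
  let s : ℕ := m.2 i
  let S : URing := umon (Function.update m.1 i 0) (Function.update m.2 i 0)
  if 0 < s then f (S * (1 - mPow i 1) ^ (s - 1) * mPow i r)
  else if r = 0 then f S
  else if r = 1 then 0
  else if 1 < r then -f (S * ∑ k ∈ Finset.Icc 1 (r.toNat - 1), mPow i (k : ℤ))
  else f (S * ∑ k ∈ Finset.range ((-r).toNat + 1), mPow i (-(k : ℤ)))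

/-- The recursive `ℤ`-linear operators `r_M^ε : 𝒰 → ℤ`, where `ε` is recorded by its
set of active indices. For `ε = ∅` it evaluates `X_i = 1`, `Z_i = 0`; otherwise it
processes the largest active index `i` and recurses on `ε \ {i}`. -/
noncomputable def rOp : Finset (Fin 5) → URing → ℤ := fun ε =>
  if h : ε.Nonempty then
    fun P => Finsupp.sum P.coeff fun m coef =>
      coef * rStep (rOp (ε.erase (ε.max' h))) (ε.max' h) m
  else
    fun P => Finsupp.sum P.coeff fun m coef => if m.2 = 0 then coef else 0
termination_by ε => ε.card
decreasing_by exact Finset.card_erase_lt_of_mem (Finset.max'_mem _ h)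

-- auxiliary lemmas
lemma rOp_add (ε : Finset (Fin 5)) (P Q : URing) :
    rOp ε (P + Q) = rOp ε P + rOp ε Q := by
  rw [rOp]
  split_ifs with h
  · exact Finsupp.sum_add_index' (fun m => zero_mul _) (fun m b₁ b₂ => add_mul _ _ _)
  · refine Finsupp.sum_add_index' (fun m => ?_) (fun m b₁ b₂ => ?_) <;> split_ifs <;> simp

lemma rOp_single_of (ε : Finset (Fin 5)) (i : Fin 5) (ε' : Finset (Fin 5))
    (h : ε.Nonempty) (hmax : ε.max' h = i) (her : ε.erase i = ε')
    (m : (Fin 5 → ℤ) × (Fin 5 → ℕ)) (c : ℤ) :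
    rOp ε (AddMonoidAlgebra.single m c) = c * rStep (rOp ε') i m := by
  rw [rOp, dif_pos h]
  simp only [hmax, her]
  exact Finsupp.sum_single_index (zero_mul _)

lemma rOp_empty (m : (Fin 5 → ℤ) × (Fin 5 → ℕ)) (c : ℤ) :
    rOp ∅ (AddMonoidAlgebra.single m c) = if m.2 = 0 then c else 0 := by
  rw [rOp, dif_neg (by simp), AddMonoidAlgebra.coeff_single, Finsupp.sum_single_index (by simp)]

lemma rOp_empty1 (v : Fin 5 → ℤ) :
    rOp ∅ (AddMonoidAlgebra.single ((v, 0) : (Fin 5 → ℤ) × (Fin 5 → ℕ)) 1) = 1 := by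
  rw [rOp_empty]; simp

lemma max4 (h) : (Finset.univ : Finset (Fin 5)).max' h = 4 :=
  le_antisymm (Finset.max'_le _ _ _ (by decide)) (Finset.le_max' _ _ (by decide))
lemma max3 (h) : ({0,1,2,3} : Finset (Fin 5)).max' h = 3 :=
  le_antisymm (Finset.max'_le _ _ _ (by decide)) (Finset.le_max' _ _ (by decide))
lemma max2 (h) : ({0,1,2} : Finset (Fin 5)).max' h = 2 :=
  le_antisymm (Finset.max'_le _ _ _ (by decide)) (Finset.le_max' _ _ (by decide))
lemma max1 (h) : ({0,1} : Finset (Fin 5)).max' h = 1 :=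
  le_antisymm (Finset.max'_le _ _ _ (by decide)) (Finset.le_max' _ _ (by decide))
lemma max0 (h) : ({0} : Finset (Fin 5)).max' h = 0 :=
  le_antisymm (Finset.max'_le _ _ _ (by decide)) (Finset.le_max' _ _ (by decide))

lemma L4 (m c) : rOp Finset.univ (AddMonoidAlgebra.single m c) = c * rStep (rOp {0,1,2,3}) 4 m :=
  rOp_single_of _ 4 _ ⟨4, by decide⟩ (max4 _) (by decide) m c
lemma L3 (m c) : rOp {0,1,2,3} (AddMonoidAlgebra.single m c) = c * rStep (rOp {0,1,2}) 3 m :=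
  rOp_single_of _ 3 _ ⟨3, by decide⟩ (max3 _) (by decide) m c
lemma L2 (m c) : rOp {0,1,2} (AddMonoidAlgebra.single m c) = c * rStep (rOp {0,1}) 2 m :=
  rOp_single_of _ 2 _ ⟨2, by decide⟩ (max2 _) (by decide) m c
lemma L1 (m c) : rOp {0,1} (AddMonoidAlgebra.single m c) = c * rStep (rOp {0}) 1 m :=
  rOp_single_of _ 1 _ ⟨1, by decide⟩ (max1 _) (by decide) m c
lemma L0 (m c) : rOp {0} (AddMonoidAlgebra.single m c) = c * rStep (rOp ∅) 0 m :=
  rOp_single_of _ 0 _ ⟨0, by decide⟩ (max0 _) (by decide) m c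

lemma updz (i : Fin 5) : Function.update (0 : Fin 5 → ℕ) i 0 = 0 :=
  funext fun j => by simp [Function.update_apply]

lemma sKey (a : Fin 5 → ℤ) (b : Fin 5 → ℤ) :
    (umon a 0 : URing) * umon b 0
      = AddMonoidAlgebra.single ((a + b, 0) : (Fin 5 → ℤ) × (Fin 5 → ℕ)) 1 := by
  rw [umon, umon,
    AddMonoidAlgebra.single_mul_single]
  norm_num

lemma rStep_r0 (f : URing → ℤ) (i : Fin 5) (v : Fin 5 → ℤ) (h : v i = 0) :
    rStep f i (v, 0) =
      f (AddMonoidAlgebra.single ((Function.update v i 0, 0) : (Fin 5 → ℤ) × (Fin 5 → ℕ)) 1) := by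
  simp [rStep, h, updz, umon]

lemma rStep_r1 (f : URing → ℤ) (i : Fin 5) (v : Fin 5 → ℤ) (h : v i = 1) :
    rStep f i (v, 0) = 0 := by
  simp [rStep, h]

lemma rStep_neg1 (f : URing → ℤ) (i : Fin 5) (v : Fin 5 → ℤ) (h : v i = -1) :
    rStep f i (v, 0) =
      f (AddMonoidAlgebra.single ((Function.update v i 0, 0) : (Fin 5 → ℤ) × (Fin 5 → ℕ)) 1
        + AddMonoidAlgebra.single ((Function.update v i 0 - mExp i, 0) : (Fin 5 → ℤ) × (Fin 5 → ℕ)) 1) := by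
  simp (config := { decide := true }) only [rStep, h, Pi.zero_apply, lt_self_iff_false,
    if_false, show (Finset.range (Int.toNat (-(-1:ℤ)) + 1) : Finset ℕ) = {0, 1} from rfl,
    show (Finset.range 2 : Finset ℕ) = {0, 1} from rfl,
    Finset.sum_insert, Finset.mem_singleton, Finset.sum_singleton, mPow,
    Nat.cast_zero, Nat.cast_one, neg_zero, zero_smul, neg_smul, one_smul, add_zero,
    sub_eq_add_neg, mul_add, sKey, updz,
    Int.reduceEq, Int.reduceLT, Int.reduceNeg, Int.reduceToNat, Nat.reduceAdd, reduceIte]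

lemma rStep_r2 (f : URing → ℤ) (i : Fin 5) (v : Fin 5 → ℤ) (h : v i = 2) :
    rStep f i (v, 0) =
      -f (AddMonoidAlgebra.single ((Function.update v i 0 + mExp i, 0) : (Fin 5 → ℤ) × (Fin 5 → ℕ)) 1) := by
  simp (config := { decide := true }) only [rStep, h, Pi.zero_apply, lt_self_iff_false,
    if_false, show (Finset.Icc 1 (Int.toNat 2 - 1) : Finset ℕ) = {1} from rfl,
    Finset.sum_insert, Finset.mem_singleton, Finset.mem_insert, Finset.sum_singleton, mPow,
    Nat.cast_one, Nat.cast_ofNat, one_smul, mul_add, sKey, updz, add_assoc,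
    Int.reduceEq, Int.reduceLT, reduceIte]

lemma rStep_r3 (f : URing → ℤ) (i : Fin 5) (v : Fin 5 → ℤ) (h : v i = 3) :
    rStep f i (v, 0) =
      -f (AddMonoidAlgebra.single ((Function.update v i 0 + mExp i, 0) : (Fin 5 → ℤ) × (Fin 5 → ℕ)) 1
        + AddMonoidAlgebra.single ((Function.update v i 0 + (2 : ℤ) • mExp i, 0) : (Fin 5 → ℤ) × (Fin 5 → ℕ)) 1) := by
  simp (config := { decide := true }) only [rStep, h, Pi.zero_apply, lt_self_iff_false,
    if_false, show (Finset.Icc 1 (Int.toNat 3 - 1) : Finset ℕ) = {1, 2} from rfl,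
    Finset.sum_insert, Finset.mem_singleton, Finset.mem_insert, Finset.sum_singleton, mPow,
    Nat.cast_one, Nat.cast_ofNat, one_smul, mul_add, sKey, updz, add_assoc,
    Int.reduceEq, Int.reduceLT, reduceIte]

lemma rStep_r4 (f : URing → ℤ) (i : Fin 5) (v : Fin 5 → ℤ) (h : v i = 4) :
    rStep f i (v, 0) =
      -f (AddMonoidAlgebra.single ((Function.update v i 0 + mExp i, 0) : (Fin 5 → ℤ) × (Fin 5 → ℕ)) 1
        + AddMonoidAlgebra.single ((Function.update v i 0 + (2 : ℤ) • mExp i, 0) : (Fin 5 → ℤ) × (Fin 5 → ℕ)) 1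
        + AddMonoidAlgebra.single ((Function.update v i 0 + (3 : ℤ) • mExp i, 0) : (Fin 5 → ℤ) × (Fin 5 → ℕ)) 1) := by
  simp (config := { decide := true }) only [rStep, h, Pi.zero_apply, lt_self_iff_false,
    if_false, show (Finset.Icc 1 (Int.toNat 4 - 1) : Finset ℕ) = {1, 2, 3} from rfl,
    Finset.sum_insert, Finset.mem_singleton, Finset.mem_insert, Finset.sum_singleton, mPow,
    Nat.cast_one, Nat.cast_ofNat, one_smul, mul_add, sKey, updz, add_assoc,
    Int.reduceEq, Int.reduceLT, reduceIte]

lemma rStep_r5 (f : URing → ℤ) (i : Fin 5) (v : Fin 5 → ℤ) (h : v i = 5) :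
    rStep f i (v, 0) =
      -f (AddMonoidAlgebra.single ((Function.update v i 0 + mExp i, 0) : (Fin 5 → ℤ) × (Fin 5 → ℕ)) 1
        + AddMonoidAlgebra.single ((Function.update v i 0 + (2 : ℤ) • mExp i, 0) : (Fin 5 → ℤ) × (Fin 5 → ℕ)) 1
        + AddMonoidAlgebra.single ((Function.update v i 0 + (3 : ℤ) • mExp i, 0) : (Fin 5 → ℤ) × (Fin 5 → ℕ)) 1
        + AddMonoidAlgebra.single ((Function.update v i 0 + (4 : ℤ) • mExp i, 0) : (Fin 5 → ℤ) × (Fin 5 → ℕ)) 1) := by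
  simp (config := { decide := true }) only [rStep, h, Pi.zero_apply, lt_self_iff_false,
    if_false, show (Finset.Icc 1 (Int.toNat 5 - 1) : Finset ℕ) = {1, 2, 3, 4} from rfl,
    Finset.sum_insert, Finset.mem_singleton, Finset.mem_insert, Finset.sum_singleton, mPow,
    Nat.cast_one, Nat.cast_ofNat, one_smul, mul_add, sKey, updz, add_assoc,
    Int.reduceEq, Int.reduceLT, reduceIte]

lemma rStep_r6 (f : URing → ℤ) (i : Fin 5) (v : Fin 5 → ℤ) (h : v i = 6) :
    rStep f i (v, 0) =
      -f (AddMonoidAlgebra.single ((Function.update v i 0 + mExp i, 0) : (Fin 5 → ℤ) × (Fin 5 → ℕ)) 1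
        + AddMonoidAlgebra.single ((Function.update v i 0 + (2 : ℤ) • mExp i, 0) : (Fin 5 → ℤ) × (Fin 5 → ℕ)) 1
        + AddMonoidAlgebra.single ((Function.update v i 0 + (3 : ℤ) • mExp i, 0) : (Fin 5 → ℤ) × (Fin 5 → ℕ)) 1
        + AddMonoidAlgebra.single ((Function.update v i 0 + (4 : ℤ) • mExp i, 0) : (Fin 5 → ℤ) × (Fin 5 → ℕ)) 1
        + AddMonoidAlgebra.single ((Function.update v i 0 + (5 : ℤ) • mExp i, 0) : (Fin 5 → ℤ) × (Fin 5 → ℕ)) 1) := by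
  simp (config := { decide := true }) only [rStep, h, Pi.zero_apply, lt_self_iff_false,
    if_false, show (Finset.Icc 1 (Int.toNat 6 - 1) : Finset ℕ) = {1, 2, 3, 4, 5} from rfl,
    Finset.sum_insert, Finset.mem_singleton, Finset.mem_insert, Finset.sum_singleton, mPow,
    Nat.cast_one, Nat.cast_ofNat, one_smul, mul_add, sKey, updz, add_assoc,
    Int.reduceEq, Int.reduceLT, reduceIte]

theorem rOp_G2_value :
    rOp Finset.univ (umon (fun _ => 2) 0) = -13 := by
  have n4 : rOp ({0}) (AddMonoidAlgebra.single ((![4, 0, 0, 0, 0] : Fin 5 → ℤ), (0 : Fin 5 → ℕ)) 1) = (-3) := by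
    rw [L0, rStep_r4 (rOp (∅ : Finset (Fin 5))) 0 (![4, 0, 0, 0, 0]) (by decide)]
    simp only [rOp_add ((∅ : Finset (Fin 5))), (show Function.update (![4, 0, 0, 0, 0] : Fin 5 → ℤ) 0 0 + mExp 0 = ![0, 0, 0, 0, 0] by decide), (show Function.update (![4, 0, 0, 0, 0] : Fin 5 → ℤ) 0 0 + (2 : ℤ) • mExp 0 = ![0, 0, 0, 0, 0] by decide), (show Function.update (![4, 0, 0, 0, 0] : Fin 5 → ℤ) 0 0 + (3 : ℤ) • mExp 0 = ![0, 0, 0, 0, 0] by decide), rOp_empty1]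
    norm_num
  have n3 : rOp ({0,1}) (AddMonoidAlgebra.single ((![1, 2, 0, 0, 0] : Fin 5 → ℤ), (0 : Fin 5 → ℕ)) 1) = (3) := by
    rw [L1, rStep_r2 (rOp {0}) 1 (![1, 2, 0, 0, 0]) (by decide)]
    simp only [rOp_add ({0}), (show Function.update (![1, 2, 0, 0, 0] : Fin 5 → ℤ) 1 0 + mExp 1 = ![4, 0, 0, 0, 0] by decide), n4]
    norm_num
  have n6 : rOp ({0}) (AddMonoidAlgebra.single ((![2, 0, 0, 0, 0] : Fin 5 → ℤ), (0 : Fin 5 → ℕ)) 1) = (-1) := by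
    rw [L0, rStep_r2 (rOp (∅ : Finset (Fin 5))) 0 (![2, 0, 0, 0, 0]) (by decide)]
    simp only [rOp_add ((∅ : Finset (Fin 5))), (show Function.update (![2, 0, 0, 0, 0] : Fin 5 → ℤ) 0 0 + mExp 0 = ![0, 0, 0, 0, 0] by decide), rOp_empty1]
    norm_num
  have n7 : rOp ({0}) (AddMonoidAlgebra.single ((![5, 0, 0, 0, 0] : Fin 5 → ℤ), (0 : Fin 5 → ℕ)) 1) = (-4) := by
    rw [L0, rStep_r5 (rOp (∅ : Finset (Fin 5))) 0 (![5, 0, 0, 0, 0]) (by decide)]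
    simp only [rOp_add ((∅ : Finset (Fin 5))), (show Function.update (![5, 0, 0, 0, 0] : Fin 5 → ℤ) 0 0 + mExp 0 = ![0, 0, 0, 0, 0] by decide), (show Function.update (![5, 0, 0, 0, 0] : Fin 5 → ℤ) 0 0 + (2 : ℤ) • mExp 0 = ![0, 0, 0, 0, 0] by decide), (show Function.update (![5, 0, 0, 0, 0] : Fin 5 → ℤ) 0 0 + (3 : ℤ) • mExp 0 = ![0, 0, 0, 0, 0] by decide), (show Function.update (![5, 0, 0, 0, 0] : Fin 5 → ℤ) 0 0 + (4 : ℤ) • mExp 0 = ![0, 0, 0, 0, 0] by decide), rOp_empty1]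
    norm_num
  have n5 : rOp ({0,1}) (AddMonoidAlgebra.single ((![-1, 3, 0, 0, 0] : Fin 5 → ℤ), (0 : Fin 5 → ℕ)) 1) = (5) := by
    rw [L1, rStep_r3 (rOp {0}) 1 (![-1, 3, 0, 0, 0]) (by decide)]
    simp only [rOp_add ({0}), (show Function.update (![-1, 3, 0, 0, 0] : Fin 5 → ℤ) 1 0 + mExp 1 = ![2, 0, 0, 0, 0] by decide), (show Function.update (![-1, 3, 0, 0, 0] : Fin 5 → ℤ) 1 0 + (2 : ℤ) • mExp 1 = ![5, 0, 0, 0, 0] by decide), n6, n7]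
    norm_num
  have n2 : rOp ({0,1,2}) (AddMonoidAlgebra.single ((![3, 1, 3, 0, 0] : Fin 5 → ℤ), (0 : Fin 5 → ℕ)) 1) = (-8) := by
    rw [L2, rStep_r3 (rOp {0,1}) 2 (![3, 1, 3, 0, 0]) (by decide)]
    simp only [rOp_add ({0,1}), (show Function.update (![3, 1, 3, 0, 0] : Fin 5 → ℤ) 2 0 + mExp 2 = ![1, 2, 0, 0, 0] by decide), (show Function.update (![3, 1, 3, 0, 0] : Fin 5 → ℤ) 2 0 + (2 : ℤ) • mExp 2 = ![-1, 3, 0, 0, 0] by decide), n3, n5]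
    norm_num
  have n9 : rOp ({0,1}) (AddMonoidAlgebra.single ((![4, 0, 0, 0, 0] : Fin 5 → ℤ), (0 : Fin 5 → ℕ)) 1) = (-3) := by
    rw [L1, rStep_r0 (rOp {0}) 1 (![4, 0, 0, 0, 0]) (by decide)]
    simp only [rOp_add ({0}), (show (Function.update (![4, 0, 0, 0, 0] : Fin 5 → ℤ) 1 0 : Fin 5 → ℤ) = ![4, 0, 0, 0, 0] by decide), n4]
    norm_num
  have n10 : rOp ({0,1}) (AddMonoidAlgebra.single ((![2, 1, 0, 0, 0] : Fin 5 → ℤ), (0 : Fin 5 → ℕ)) 1) = (0) := by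
    rw [L1, rStep_r1 (rOp {0}) 1 (![2, 1, 0, 0, 0]) (by decide)]
    norm_num
  have n12 : rOp ({0}) (AddMonoidAlgebra.single ((![3, 0, 0, 0, 0] : Fin 5 → ℤ), (0 : Fin 5 → ℕ)) 1) = (-2) := by
    rw [L0, rStep_r3 (rOp (∅ : Finset (Fin 5))) 0 (![3, 0, 0, 0, 0]) (by decide)]
    simp only [rOp_add ((∅ : Finset (Fin 5))), (show Function.update (![3, 0, 0, 0, 0] : Fin 5 → ℤ) 0 0 + mExp 0 = ![0, 0, 0, 0, 0] by decide), (show Function.update (![3, 0, 0, 0, 0] : Fin 5 → ℤ) 0 0 + (2 : ℤ) • mExp 0 = ![0, 0, 0, 0, 0] by decide), rOp_empty1]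
    norm_num
  have n11 : rOp ({0,1}) (AddMonoidAlgebra.single ((![0, 2, 0, 0, 0] : Fin 5 → ℤ), (0 : Fin 5 → ℕ)) 1) = (2) := by
    rw [L1, rStep_r2 (rOp {0}) 1 (![0, 2, 0, 0, 0]) (by decide)]
    simp only [rOp_add ({0}), (show Function.update (![0, 2, 0, 0, 0] : Fin 5 → ℤ) 1 0 + mExp 1 = ![3, 0, 0, 0, 0] by decide), n12]
    norm_num
  have n14 : rOp ({0}) (AddMonoidAlgebra.single ((![1, 0, 0, 0, 0] : Fin 5 → ℤ), (0 : Fin 5 → ℕ)) 1) = (0) := by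
    rw [L0, rStep_r1 (rOp (∅ : Finset (Fin 5))) 0 (![1, 0, 0, 0, 0]) (by decide)]
    norm_num
  have n13 : rOp ({0,1}) (AddMonoidAlgebra.single ((![-2, 3, 0, 0, 0] : Fin 5 → ℤ), (0 : Fin 5 → ℕ)) 1) = (3) := by
    rw [L1, rStep_r3 (rOp {0}) 1 (![-2, 3, 0, 0, 0]) (by decide)]
    simp only [rOp_add ({0}), (show Function.update (![-2, 3, 0, 0, 0] : Fin 5 → ℤ) 1 0 + mExp 1 = ![1, 0, 0, 0, 0] by decide), (show Function.update (![-2, 3, 0, 0, 0] : Fin 5 → ℤ) 1 0 + (2 : ℤ) • mExp 1 = ![4, 0, 0, 0, 0] by decide), n14, n4]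
    norm_num
  have n16 : rOp ({0}) (AddMonoidAlgebra.single ((![-1, 0, 0, 0, 0] : Fin 5 → ℤ), (0 : Fin 5 → ℕ)) 1) = (2) := by
    rw [L0, rStep_neg1 (rOp (∅ : Finset (Fin 5))) 0 (![-1, 0, 0, 0, 0]) (by decide)]
    simp only [rOp_add ((∅ : Finset (Fin 5))), (show (Function.update (![-1, 0, 0, 0, 0] : Fin 5 → ℤ) 0 0 : Fin 5 → ℤ) = ![0, 0, 0, 0, 0] by decide), (show Function.update (![-1, 0, 0, 0, 0] : Fin 5 → ℤ) 0 0 - mExp 0 = ![0, 0, 0, 0, 0] by decide), rOp_empty1]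
    norm_num
  have n15 : rOp ({0,1}) (AddMonoidAlgebra.single ((![-4, 4, 0, 0, 0] : Fin 5 → ℤ), (0 : Fin 5 → ℕ)) 1) = (3) := by
    rw [L1, rStep_r4 (rOp {0}) 1 (![-4, 4, 0, 0, 0]) (by decide)]
    simp only [rOp_add ({0}), (show Function.update (![-4, 4, 0, 0, 0] : Fin 5 → ℤ) 1 0 + mExp 1 = ![-1, 0, 0, 0, 0] by decide), (show Function.update (![-4, 4, 0, 0, 0] : Fin 5 → ℤ) 1 0 + (2 : ℤ) • mExp 1 = ![2, 0, 0, 0, 0] by decide), (show Function.update (![-4, 4, 0, 0, 0] : Fin 5 → ℤ) 1 0 + (3 : ℤ) • mExp 1 = ![5, 0, 0, 0, 0] by decide), n16, n6, n7]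
    norm_num
  have n8 : rOp ({0,1,2}) (AddMonoidAlgebra.single ((![6, -1, 6, 0, 0] : Fin 5 → ℤ), (0 : Fin 5 → ℕ)) 1) = (-5) := by
    rw [L2, rStep_r6 (rOp {0,1}) 2 (![6, -1, 6, 0, 0]) (by decide)]
    simp only [rOp_add ({0,1}), (show Function.update (![6, -1, 6, 0, 0] : Fin 5 → ℤ) 2 0 + mExp 2 = ![4, 0, 0, 0, 0] by decide), (show Function.update (![6, -1, 6, 0, 0] : Fin 5 → ℤ) 2 0 + (2 : ℤ) • mExp 2 = ![2, 1, 0, 0, 0] by decide), (show Function.update (![6, -1, 6, 0, 0] : Fin 5 → ℤ) 2 0 + (3 : ℤ) • mExp 2 = ![0, 2, 0, 0, 0] by decide), (show Function.update (![6, -1, 6, 0, 0] : Fin 5 → ℤ) 2 0 + (4 : ℤ) • mExp 2 = ![-2, 3, 0, 0, 0] by decide), (show Function.update (![6, -1, 6, 0, 0] : Fin 5 → ℤ) 2 0 + (5 : ℤ) • mExp 2 = ![-4, 4, 0, 0, 0] by decide), n9, n10, n11, n13, n15]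
    norm_num
  have n1 : rOp ({0,1,2,3}) (AddMonoidAlgebra.single ((![0, 3, 0, 3, 0] : Fin 5 → ℤ), (0 : Fin 5 → ℕ)) 1) = (13) := by
    rw [L3, rStep_r3 (rOp {0,1,2}) 3 (![0, 3, 0, 3, 0]) (by decide)]
    simp only [rOp_add ({0,1,2}), (show Function.update (![0, 3, 0, 3, 0] : Fin 5 → ℤ) 3 0 + mExp 3 = ![3, 1, 3, 0, 0] by decide), (show Function.update (![0, 3, 0, 3, 0] : Fin 5 → ℤ) 3 0 + (2 : ℤ) • mExp 3 = ![6, -1, 6, 0, 0] by decide), n2, n8]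
    norm_num
  have n0 : rOp (Finset.univ) (AddMonoidAlgebra.single ((![2, 2, 2, 2, 2] : Fin 5 → ℤ), (0 : Fin 5 → ℕ)) 1) = (-13) := by
    rw [L4, rStep_r2 (rOp {0,1,2,3}) 4 (![2, 2, 2, 2, 2]) (by decide)]
    simp only [rOp_add ({0,1,2,3}), (show Function.update (![2, 2, 2, 2, 2] : Fin 5 → ℤ) 4 0 + mExp 4 = ![0, 3, 0, 3, 0] by decide), n1]
    norm_num
  have hv : (fun _ => (2:ℤ)) = ![2,2,2,2,2] := by decide
  rw [show umon (fun _ => 2) 0 = AddMonoidAlgebra.single ((![2,2,2,2,2] : Fin 5 → ℤ), (0 : Fin 5 → ℕ)) 1 by rw [umon]; rw [hv]]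
  exact n0
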